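/- Let G be a 2-edge-colored simple graph with colors R, B containing no non-monochromatic triangle and no properly-colored 4-cycle. If S1 and S2 are disjoint seagulls, r = e_R(S1,S2), b = e_B(S1,S2), then r + b + max{r, b} ≤ 9. -/

import Mathlib

def cntT (x : Option Bool) : ℕ := if x = some true then 1 else 0
def cntF (x : Option Bool) : ℕ := if x = some false then 1 else 0

open scoped Classical in
noncomputable def ocol {V : Type*} (R B : Set (Sym2 V)) (u v : V) : Option Bool :=
  if s(u, v) ∈ R then some true else if s(u, v) ∈ B then some false else none

lemma ocol_T {V : Type*} {R B : Set (Sym2 V)} {u v : V} :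
    ocol R B u v = some true ↔ s(u, v) ∈ R := by
  classical
  by_cases h : s(u, v) ∈ R
  · simp [ocol, h]
  · by_cases h' : s(u, v) ∈ B <;> simp [ocol, h, h']

lemma ocol_F {V : Type*} {R B : Set (Sym2 V)} (hd : Disjoint R B) {u v : V} :
    ocol R B u v = some false ↔ s(u, v) ∈ B := by
  classical
  by_cases h : s(u, v) ∈ R
  · simp only [ocol, if_pos h]
    constructor
    · intro hc; exact absurd hc (by simp)
    · intro hB; exact absurd hB (Set.disjoint_left.mp hd h)
  · by_cases h' : s(u, v) ∈ B <;> simp [ocol, h, h']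

lemma ocol_symm {V : Type*} (R B : Set (Sym2 V)) (u v : V) :
    ocol R B u v = ocol R B v u := by
  unfold ocol
  rw [Sym2.eq_swap]

lemma three_distinct {V : Type*} [DecidableEq V] {a b c : V}
    (h : ({a, b, c} : Finset V).card = 3) : a ≠ b ∧ a ≠ c ∧ b ≠ c := by
  have hle2 : ∀ x y : V, ({x, y} : Finset V).card ≤ 2 := by
    intro x y
    have := Finset.card_insert_le x ({y} : Finset V)
    simpa using this
  refine ⟨?_, ?_, ?_⟩
  · rintro rfl
    have he : ({a, a, c} : Finset V) = {a, c} := by ext x; simp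
    rw [he] at h; have := hle2 a c; omega
  · rintro rfl
    have he : ({a, b, a} : Finset V) = {a, b} := by ext x; simp; tauto
    rw [he] at h; have := hle2 a b; omega
  · rintro rfl
    have he : ({a, b, b} : Finset V) = {a, b} := by ext x; simp
    rw [he] at h; have := hle2 a b; omega

lemma sum3 {V : Type*} [DecidableEq V] {a b c : V}
    (hab : a ≠ b) (hac : a ≠ c) (hbc : b ≠ c) (g : V → ℕ) :
    ∑ y ∈ ({a, b, c} : Finset V), g y = g a + g b + g c := by
  rw [Finset.sum_insert (by simp [hab, hac]), Finset.sum_insert (by simp [hbc]),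
    Finset.sum_singleton, add_assoc]

lemma sum9 {V : Type*} [DecidableEq V] {x1 y1 z1 x2 y2 z2 : V}
    (h12 : x1 ≠ y1) (h13 : x1 ≠ z1) (h23 : y1 ≠ z1)
    (k12 : x2 ≠ y2) (k13 : x2 ≠ z2) (k23 : y2 ≠ z2) (f : V × V → ℕ) :
    ∑ p ∈ ({x1, y1, z1} : Finset V) ×ˢ ({x2, y2, z2} : Finset V), f p =
      f (x1, x2) + f (x1, y2) + f (x1, z2) + f (y1, x2) + f (y1, y2) + f (y1, z2) +
        f (z1, x2) + f (z1, y2) + f (z1, z2) := by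
  rw [Finset.sum_product, sum3 h12 h13 h23]
  simp only [sum3 k12 k13 k23]
  ring

set_option synthInstance.maxSize 200000 in
set_option synthInstance.maxHeartbeats 1000000 in
set_option maxHeartbeats 2000000 in
theorem key_lemma : ∀ c00 c01 c02 c10 c11 c12 c20 c21 c22 : Option Bool,
  (c00 ≠ none → c10 ≠ none → c00 = some true ∧ c10 = some true) →
  (c01 ≠ none → c11 ≠ none → c01 = some true ∧ c11 = some true) →
  (c02 ≠ none → c12 ≠ none → c02 = some true ∧ c12 = some true) →
  (c10 ≠ none → c20 ≠ none → c10 = some false ∧ c20 = some false) →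
  (c11 ≠ none → c21 ≠ none → c11 = some false ∧ c21 = some false) →
  (c12 ≠ none → c22 ≠ none → c12 = some false ∧ c22 = some false) →
  (c00 ≠ none → c01 ≠ none → c00 = some true ∧ c01 = some true) →
  (c10 ≠ none → c11 ≠ none → c10 = some true ∧ c11 = some true) →
  (c20 ≠ none → c21 ≠ none → c20 = some true ∧ c21 = some true) →
  (c01 ≠ none → c02 ≠ none → c01 = some false ∧ c02 = some false) →
  (c11 ≠ none → c12 ≠ none → c11 = some false ∧ c12 = some false) →
  (c21 ≠ none → c22 ≠ none → c21 = some false ∧ c22 = some false) →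
  (¬ (c10 = some false ∧ c01 = some false)) →
  (¬ (c11 = some false ∧ c00 = some false)) →
  (¬ (c21 = some true ∧ c12 = some true)) →
  (¬ (c22 = some true ∧ c11 = some true)) →
  (cntT c00 + cntT c01 + cntT c02 + cntT c10 + cntT c11 + cntT c12 + cntT c20 + cntT c21 + cntT c22)
  + (cntF c00 + cntF c01 + cntF c02 + cntF c10 + cntF c11 + cntF c12 + cntF c20 + cntF c21 + cntF c22)
  + max (cntT c00 + cntT c01 + cntT c02 + cntT c10 + cntT c11 + cntT c12 + cntT c20 + cntT c21 + cntT c22)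
        (cntF c00 + cntF c01 + cntF c02 + cntF c10 + cntF c11 + cntF c12 + cntF c20 + cntF c21 + cntF c22) ≤ 9 := by
  decide

open scoped Classical in
theorem seagulls_colour_count {V : Type*} [DecidableEq V]
    (G : SimpleGraph V) (R B : Set (Sym2 V))
    (hU : R ∪ B = G.edgeSet) (hd : Disjoint R B)
    -- no non-monochromatic triangle
    (hNoNM : ∀ a b c : V, G.Adj a b → G.Adj b c → G.Adj a c →
      (s(a, b) ∈ R ∧ s(b, c) ∈ R ∧ s(a, c) ∈ R) ∨
      (s(a, b) ∈ B ∧ s(b, c) ∈ B ∧ s(a, c) ∈ B))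
    -- no properly-coloured 4-cycle
    (hNoAlt : ¬ ∃ a b c d : V, a ≠ b ∧ a ≠ c ∧ a ≠ d ∧ b ≠ c ∧ b ≠ d ∧ c ≠ d ∧
      s(a, b) ∈ R ∧ s(b, c) ∈ B ∧ s(c, d) ∈ R ∧ s(d, a) ∈ B)
    -- two disjoint seagulls
    (x1 y1 z1 x2 y2 z2 : V)
    (hdisj : ({x1, y1, z1} : Finset V) ∩ ({x2, y2, z2} : Finset V) = ∅)
    (hcard1 : ({x1, y1, z1} : Finset V).card = 3)
    (hcard2 : ({x2, y2, z2} : Finset V).card = 3)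
    (h1R : s(x1, y1) ∈ R) (h1B : s(y1, z1) ∈ B)
    (h2R : s(x2, y2) ∈ R) (h2B : s(y2, z2) ∈ B)
    (r b : ℕ)
    (hr : r = ((({x1, y1, z1} : Finset V) ×ˢ ({x2, y2, z2} : Finset V)).filter
        (fun p : V × V => G.Adj p.1 p.2 ∧ s(p.1, p.2) ∈ R)).card)
    (hb : b = ((({x1, y1, z1} : Finset V) ×ˢ ({x2, y2, z2} : Finset V)).filter
        (fun p : V × V => G.Adj p.1 p.2 ∧ s(p.1, p.2) ∈ B)).card) :
    r + b + max r b ≤ 9 := by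
  obtain ⟨h12, h13, h23⟩ := three_distinct hcard1
  obtain ⟨k12, k13, k23⟩ := three_distinct hcard2
  have hcross : ∀ u ∈ ({x1, y1, z1} : Finset V), ∀ v ∈ ({x2, y2, z2} : Finset V), u ≠ v := by
    intro u hu v hv h
    subst h
    have hmem : u ∈ ({x1, y1, z1} : Finset V) ∩ {x2, y2, z2} := Finset.mem_inter.mpr ⟨hu, hv⟩
    rw [hdisj] at hmem
    exact absurd hmem (Finset.notMem_empty u)
  have nx1x2 : x1 ≠ x2 := hcross x1 (by simp) x2 (by simp)
  have nx1y2 : x1 ≠ y2 := hcross x1 (by simp) y2 (by simp)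
  have nx1z2 : x1 ≠ z2 := hcross x1 (by simp) z2 (by simp)
  have ny1x2 : y1 ≠ x2 := hcross y1 (by simp) x2 (by simp)
  have ny1y2 : y1 ≠ y2 := hcross y1 (by simp) y2 (by simp)
  have ny1z2 : y1 ≠ z2 := hcross y1 (by simp) z2 (by simp)
  have nz1x2 : z1 ≠ x2 := hcross z1 (by simp) x2 (by simp)
  have nz1y2 : z1 ≠ y2 := hcross z1 (by simp) y2 (by simp)
  have nz1z2 : z1 ≠ z2 := hcross z1 (by simp) z2 (by simp)
  have hAdjR : ∀ u v : V, s(u, v) ∈ R → G.Adj u v := by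
    intro u v h
    have hm : s(u, v) ∈ G.edgeSet := by rw [← hU]; exact Or.inl h
    exact G.mem_edgeSet.mp hm
  have hAdjB : ∀ u v : V, s(u, v) ∈ B → G.Adj u v := by
    intro u v h
    have hm : s(u, v) ∈ G.edgeSet := by rw [← hU]; exact Or.inr h
    exact G.mem_edgeSet.mp hm
  have hoN : ∀ u v : V, ocol R B u v ≠ none → G.Adj u v := by
    intro u v h
    by_cases hR : s(u, v) ∈ R
    · exact hAdjR u v hR
    · by_cases hB2 : s(u, v) ∈ B
      · exact hAdjB u v hB2
      · exact absurd (by simp [ocol, hR, hB2]) h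
  have hswapR : ∀ u v : V, s(u, v) ∈ R → s(v, u) ∈ R := by
    intro u v h; rwa [Sym2.eq_swap]
  have hswapB : ∀ u v : V, s(u, v) ∈ B → s(v, u) ∈ B := by
    intro u v h; rwa [Sym2.eq_swap]
  have htriR : ∀ u v w : V, s(u, v) ∈ R → ocol R B u w ≠ none → ocol R B v w ≠ none →
      ocol R B u w = some true ∧ ocol R B v w = some true := by
    intro u v w huv h1 h2
    rcases hNoNM u v w (hAdjR u v huv) (hoN v w h2) (hoN u w h1) with
      ⟨_, hvw, huw⟩ | ⟨hBB, _, _⟩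
    · exact ⟨ocol_T.mpr huw, ocol_T.mpr hvw⟩
    · exact absurd hBB (Set.disjoint_left.mp hd huv)
  have htriB : ∀ u v w : V, s(u, v) ∈ B → ocol R B u w ≠ none → ocol R B v w ≠ none →
      ocol R B u w = some false ∧ ocol R B v w = some false := by
    intro u v w huv h1 h2
    rcases hNoNM u v w (hAdjB u v huv) (hoN v w h2) (hoN u w h1) with
      ⟨hRR, _, _⟩ | ⟨_, hvw, huw⟩
    · exact absurd huv (Set.disjoint_left.mp hd hRR)
    · exact ⟨(ocol_F hd).mpr huw, (ocol_F hd).mpr hvw⟩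
  have htriRc : ∀ u v w : V, s(u, v) ∈ R → ocol R B w u ≠ none → ocol R B w v ≠ none →
      ocol R B w u = some true ∧ ocol R B w v = some true := by
    intro u v w huv h1 h2
    have h1' : ocol R B u w ≠ none := by rw [ocol_symm]; exact h1
    have h2' : ocol R B v w ≠ none := by rw [ocol_symm]; exact h2
    obtain ⟨ha, hb'⟩ := htriR u v w huv h1' h2'
    exact ⟨by rw [ocol_symm]; exact ha, by rw [ocol_symm]; exact hb'⟩
  have htriBc : ∀ u v w : V, s(u, v) ∈ B → ocol R B w u ≠ none → ocol R B w v ≠ none →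
      ocol R B w u = some false ∧ ocol R B w v = some false := by
    intro u v w huv h1 h2
    have h1' : ocol R B u w ≠ none := by rw [ocol_symm]; exact h1
    have h2' : ocol R B v w ≠ none := by rw [ocol_symm]; exact h2
    obtain ⟨ha, hb'⟩ := htriB u v w huv h1' h2'
    exact ⟨by rw [ocol_symm]; exact ha, by rw [ocol_symm]; exact hb'⟩
  have hq1 : ¬ (ocol R B y1 x2 = some false ∧ ocol R B x1 y2 = some false) := by
    rintro ⟨ha, hb2⟩
    exact hNoAlt ⟨x1, y1, x2, y2, h12, nx1x2, nx1y2, ny1x2, ny1y2, k12,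
      h1R, (ocol_F hd).mp ha, h2R, hswapB x1 y2 ((ocol_F hd).mp hb2)⟩
  have hq2 : ¬ (ocol R B y1 y2 = some false ∧ ocol R B x1 x2 = some false) := by
    rintro ⟨ha, hb2⟩
    exact hNoAlt ⟨x1, y1, y2, x2, h12, nx1y2, nx1x2, ny1y2, ny1x2, Ne.symm k12,
      h1R, (ocol_F hd).mp ha, hswapR x2 y2 h2R, hswapB x1 x2 ((ocol_F hd).mp hb2)⟩
  have hq3 : ¬ (ocol R B z1 y2 = some true ∧ ocol R B y1 z2 = some true) := by
    rintro ⟨ha, hb2⟩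
    exact hNoAlt ⟨z1, y2, z2, y1, nz1y2, nz1z2, Ne.symm h23, k23, Ne.symm ny1y2, Ne.symm ny1z2,
      ocol_T.mp ha, h2B, hswapR y1 z2 (ocol_T.mp hb2), h1B⟩
  have hq4 : ¬ (ocol R B z1 z2 = some true ∧ ocol R B y1 y2 = some true) := by
    rintro ⟨ha, hb2⟩
    exact hNoAlt ⟨z1, z2, y2, y1, nz1z2, nz1y2, Ne.symm h23, Ne.symm k23, Ne.symm ny1z2, Ne.symm ny1y2,
      ocol_T.mp ha, hswapB y2 z2 h2B, hswapR y1 y2 (ocol_T.mp hb2), h1B⟩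
  have hptR : ∀ u v : V, (if (G.Adj u v ∧ s(u, v) ∈ R) then 1 else 0 : ℕ) = cntT (ocol R B u v) := by
    intro u v
    unfold cntT
    by_cases hR : s(u, v) ∈ R
    · rw [if_pos ⟨hAdjR u v hR, hR⟩, if_pos (ocol_T.mpr hR)]
    · rw [if_neg (fun hc => hR hc.2), if_neg (fun hc => hR (ocol_T.mp hc))]
  have hptB : ∀ u v : V, (if (G.Adj u v ∧ s(u, v) ∈ B) then 1 else 0 : ℕ) = cntF (ocol R B u v) := by
    intro u v
    unfold cntF
    by_cases hB2 : s(u, v) ∈ B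
    · rw [if_pos ⟨hAdjB u v hB2, hB2⟩, if_pos ((ocol_F hd).mpr hB2)]
    · rw [if_neg (fun hc => hB2 hc.2), if_neg (fun hc => hB2 ((ocol_F hd).mp hc))]
  have hrs : r = cntT (ocol R B x1 x2) + cntT (ocol R B x1 y2) + cntT (ocol R B x1 z2)
      + cntT (ocol R B y1 x2) + cntT (ocol R B y1 y2) + cntT (ocol R B y1 z2)
      + cntT (ocol R B z1 x2) + cntT (ocol R B z1 y2) + cntT (ocol R B z1 z2) := by
    rw [hr, Finset.card_filter, sum9 h12 h13 h23 k12 k13 k23]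
    simp only [hptR]
  have hbs : b = cntF (ocol R B x1 x2) + cntF (ocol R B x1 y2) + cntF (ocol R B x1 z2)
      + cntF (ocol R B y1 x2) + cntF (ocol R B y1 y2) + cntF (ocol R B y1 z2)
      + cntF (ocol R B z1 x2) + cntF (ocol R B z1 y2) + cntF (ocol R B z1 z2) := by
    rw [hb, Finset.card_filter, sum9 h12 h13 h23 k12 k13 k23]
    simp only [hptB]
  have hkey := key_lemma (ocol R B x1 x2) (ocol R B x1 y2) (ocol R B x1 z2)
      (ocol R B y1 x2) (ocol R B y1 y2) (ocol R B y1 z2)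
      (ocol R B z1 x2) (ocol R B z1 y2) (ocol R B z1 z2)
      (htriR x1 y1 x2 h1R) (htriR x1 y1 y2 h1R) (htriR x1 y1 z2 h1R)
      (htriB y1 z1 x2 h1B) (htriB y1 z1 y2 h1B) (htriB y1 z1 z2 h1B)
      (htriRc x2 y2 x1 h2R) (htriRc x2 y2 y1 h2R) (htriRc x2 y2 z1 h2R)
      (htriBc y2 z2 x1 h2B) (htriBc y2 z2 y1 h2B) (htriBc y2 z2 z1 h2B)
      hq1 hq2 hq3 hq4
  rw [hrs, hbs]
  exact hkey
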